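/- The number of perfect matchings of {1,...,2n-2} having exactly k pairs (i,j) with i ∈ {1,...,n} and j ∈ {n+1,...,2n-2} equals C(n,k)·C(n-2,k)·k!·(n-k-1)!!·(n-k-3)!! when n-k is even, and 0 when n-k is odd. -/

import Mathlib

open Finset Function

/-- A perfect matching of `{1,…,m}`: a fixed-point free involution. -/
def Matching (m : ℕ) : Type :=
  {π : Equiv.Perm (Fin m) // ∀ i, π i ≠ i ∧ π (π i) = i}

/-- The number of pairs `(i,j)` of the matching with `i ∈ {1,…,n}` and
`j ∈ {n+1,…,2n-2}` (elements of `{1,…,2n-2}` are encoded as `Fin (2n-2)`,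
the element `i` corresponding to the index `i-1`). -/
def crossPairs (n : ℕ) (π : Matching (2 * n - 2)) : ℕ :=
  (Finset.univ.filter (fun i : Fin (2 * n - 2) => i.1 < n ∧ n ≤ (π.1 i).1)).card

def FPF (α : Type) : Type := {π : Equiv.Perm α // ∀ i, π i ≠ i ∧ π (π i) = i}

/-- target count function -/
def mf (m : ℕ) : ℕ := if Even m then (m - 1).doubleFactorial else 0

instance FPF.fintype (α : Type) [Fintype α] [DecidableEq α] : Fintype (FPF α) := by
  unfold FPF; infer_instance

/-- extend a fpf involution on `{x // x ≠ a ∧ x ≠ b}` by the pair `(a,b)` -/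
noncomputable def extFun {α : Type} [DecidableEq α] (a b : α)
    (σ : FPF {x : α // x ≠ a ∧ x ≠ b}) : α → α :=
  fun x => if hx : x = a then b else if hx' : x = b then a else (σ.1 ⟨x, hx, hx'⟩).1

theorem extFun_inv {α : Type} [DecidableEq α] (a b : α) (hab : b ≠ a)
    (σ : FPF {x : α // x ≠ a ∧ x ≠ b}) : Involutive (extFun a b σ) := by
  intro x
  unfold extFun
  by_cases hx : x = a
  · subst hx
    simp [hab]
  · by_cases hx' : x = b
    · subst hx'
      simp [hab]
    · have h2 := (σ.1 ⟨x, hx, hx'⟩).2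
      simp only [dif_neg hx, dif_neg hx', dif_neg h2.1, dif_neg h2.2, Subtype.coe_eta]
      rw [(σ.2 ⟨x, hx, hx'⟩).2]


theorem extFun_fpf {α : Type} [DecidableEq α] (a b : α) (hab : b ≠ a)
    (σ : FPF {x : α // x ≠ a ∧ x ≠ b}) (x : α) : extFun a b σ x ≠ x := by
  unfold extFun
  by_cases hx : x = a
  · subst hx; simp only [dif_pos rfl]; exact hab
  · by_cases hx' : x = b
    · subst hx'; simp only [dif_neg hx, dif_pos rfl]; exact fun h => hab h.symm
    · simp only [dif_neg hx, dif_neg hx']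
      intro h
      exact (σ.2 ⟨x, hx, hx'⟩).1 (Subtype.ext h)

theorem fpf_iff {α : Type} (π : Equiv.Perm α) (hπ : ∀ i, π i ≠ i ∧ π (π i) = i)
    (a b : α) (hb : π a = b) (x : α) : (x ≠ a ∧ x ≠ b) ↔ (π x ≠ a ∧ π x ≠ b) := by
  constructor
  · rintro ⟨h1, h3⟩
    refine ⟨fun h => h3 ?_, fun h => h1 ?_⟩
    · have := congrArg π h
      rw [(hπ x).2, hb] at this; exact this
    · exact π.injective (h.trans hb.symm)
  · rintro ⟨h1, h3⟩
    refine ⟨fun h => h3 ?_, fun h => h1 ?_⟩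
    · subst h; exact hb
    · subst h; rw [← hb, (hπ a).2]

noncomputable def fiberEquivA {α : Type} [Fintype α] [DecidableEq α] (a : α) (b : {b : α // b ≠ a}) :
    {π : FPF α // π.1 a = b.1} ≃ FPF {x : α // x ≠ a ∧ x ≠ b.1} where
  toFun := fun π => ⟨π.1.1.subtypePerm (p := fun x => x ≠ a ∧ x ≠ b.1)
      (fun x => (fpf_iff π.1.1 π.1.2 a b.1 π.2 x).symm),
    by
      intro i
      refine ⟨fun h => (π.1.2 i.1).1 (congrArg Subtype.val h), ?_⟩
      apply Subtype.ext
      exact (π.1.2 i.1).2⟩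
  invFun := fun σ =>
    ⟨⟨(extFun_inv a b.1 b.2 σ).toPerm,
      fun i => ⟨extFun_fpf a b.1 b.2 σ i, extFun_inv a b.1 b.2 σ i⟩⟩,
     by
      show extFun a b.1 σ a = b.1
      unfold extFun; simp⟩
  left_inv := by
    rintro ⟨⟨π, hπ⟩, hb⟩
    have hb' : π a = (b : α) := hb
    apply Subtype.ext
    apply Subtype.ext
    apply Equiv.ext
    intro x
    show extFun a b.1 _ x = π x
    unfold extFun
    by_cases hx : x = a
    · subst hx; simp only [dif_pos rfl]; exact hb'.symm
    · by_cases hx' : x = b.1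
      · subst hx'
        have hba : π (b : α) = a := by rw [← hb', (hπ a).2]
        simp only [dif_neg hx, dif_pos rfl, hba, dite_true]
      · simp [dif_neg hx, dif_neg hx', Equiv.Perm.subtypePerm]
  right_inv := by
    rintro ⟨σ, hσ⟩
    apply Subtype.ext
    apply Equiv.ext
    rintro ⟨x, hx, hx'⟩
    apply Subtype.ext
    show extFun a b.1 _ x = _
    unfold extFun
    simp only [dif_neg hx, dif_neg hx']


theorem mf_succ (m : ℕ) : mf (m + 1) = m * mf (m - 1) := by
  rcases Nat.even_or_odd m with h | h
  · have h1 : ¬ Even (m + 1) := by simp [Nat.even_add_one, h]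
    rw [mf, if_neg h1]
    rcases Nat.eq_zero_or_pos m with rfl | hm
    · simp
    · have h2 : ¬ Even (m - 1) := by
        rcases h with ⟨t, ht⟩; rintro ⟨s, hs⟩; omega
      rw [mf, if_neg h2, mul_zero]
  · obtain ⟨t, ht⟩ := h
    subst ht
    have h1 : Even (2 * t + 1 + 1) := ⟨t + 1, by ring⟩
    have h2 : Even (2 * t + 1 - 1) := ⟨t, by omega⟩
    rw [mf, if_pos h1, mf, if_pos h2,
      (by omega : 2 * t + 1 + 1 - 1 = 2 * t + 1), (by omega : 2 * t + 1 - 1 - 1 = 2 * t - 1)]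
    rcases t with _ | t
    · rfl
    · rw [(by omega : 2 * (t + 1) + 1 = (2 * t + 1) + 2),
        (by omega : 2 * (t + 1) - 1 = 2 * t + 1),
        Nat.doubleFactorial_add_two]

theorem card_pair_compl {α : Type} [Fintype α] [DecidableEq α] (a b : α) (hab : b ≠ a) :
    Fintype.card {x : α // x ≠ a ∧ x ≠ b} = Fintype.card α - 2 := by
  have h1 : Fintype.card {x : α // x ≠ a ∧ x ≠ b} =
      Fintype.card {x : α // ¬ x ∈ ({a, b} : Finset α)} := by
    apply Fintype.card_congr
    apply Equiv.subtypeEquivRight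
    intro x
    simp [not_or]
  rw [h1, Fintype.card_subtype_compl, Fintype.card_coe]
  congr 1
  rw [Finset.card_insert_of_notMem (by simpa using fun h => hab h.symm)]
  simp

theorem fpf_card_aux : ∀ (m : ℕ) (α : Type) [Fintype α] [DecidableEq α],
    Fintype.card α = m → Fintype.card (FPF α) = mf m := by
  intro m
  induction m using Nat.strong_induction_on with
  | _ m IH =>
    intro α _ _ hm
    rcases m with _ | m
    · have : IsEmpty α := Fintype.card_eq_zero_iff.mp hm
      have hmf : mf 0 = 1 := rfl
      rw [hmf, Fintype.card_eq_one_iff]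
      refine ⟨⟨1, fun i => (this.false i).elim⟩, ?_⟩
      rintro ⟨π, hπ⟩
      apply Subtype.ext
      apply Equiv.ext
      intro i
      exact (this.false i).elim
    · have hne : Nonempty α := Fintype.card_pos_iff.mp (by omega)
      obtain ⟨a⟩ := hne
      have E : FPF α ≃ Σ b : {b : α // b ≠ a}, {π : FPF α // π.1 a = b.1} := by
        refine (Equiv.sigmaFiberEquiv
          (fun π : FPF α => (⟨π.1.1 a, (π.2 a).1⟩ : {b : α // b ≠ a}))).symm.trans ?_
        apply Equiv.sigmaCongrRight
        intro b
        exact Equiv.subtypeEquivRight (fun π => Subtype.ext_iff)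
      rw [Fintype.card_congr E, Fintype.card_sigma]
      have hsummand : ∀ b : {b : α // b ≠ a},
          Fintype.card {π : FPF α // π.1 a = b.1} = mf (m - 1) := by
        intro b
        rw [Fintype.card_congr (fiberEquivA a b)]
        exact IH (m - 1) (by omega) _ (by rw [card_pair_compl a b.1 b.2, hm]; omega)
      rw [Finset.sum_congr rfl (fun b _ => hsummand b), Finset.sum_const, smul_eq_mul,
        mf_succ]
      congr 1
      rw [Finset.card_univ, Fintype.card_subtype_compl, Fintype.card_subtype_eq, hm]
      omega

section LemB

variable {α : Type} [Fintype α] [DecidableEq α] (p : α → Prop) [DecidablePred p]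

def crossS (π : FPF α) : Finset α := Finset.univ.filter (fun x => p x ∧ ¬ p (π.1 x))

def crossT (π : FPF α) : Finset α := Finset.univ.filter (fun x => ¬ p x ∧ p (π.1 x))

theorem crossT_eq_image (π : FPF α) : crossT p π = (crossS p π).image π.1 := by
  ext y
  simp only [crossT, crossS, Finset.mem_image, Finset.mem_filter, Finset.mem_univ, true_and]
  constructor
  · rintro ⟨h1, h2⟩
    exact ⟨π.1 y, ⟨h2, by rw [(π.2 y).2]; exact h1⟩, (π.2 y).2⟩
  · rintro ⟨x, ⟨hx1, hx2⟩, rfl⟩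
    exact ⟨hx2, by rw [(π.2 x).2]; exact hx1⟩

theorem crossT_card (π : FPF α) : (crossT p π).card = (crossS p π).card := by
  rw [crossT_eq_image, Finset.card_image_of_injective _ π.1.injective]

theorem crossS_subset (π : FPF α) : crossS p π ⊆ Finset.univ.filter p := by
  intro x hx
  simp only [crossS, Finset.mem_filter] at hx ⊢
  exact ⟨hx.1, hx.2.1⟩

theorem crossT_subset (π : FPF α) : crossT p π ⊆ Finset.univ.filter (fun x => ¬ p x) := by
  intro x hx
  simp only [crossT, Finset.mem_filter] at hx ⊢
  exact ⟨hx.1, hx.2.1⟩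

variable (S T : Finset α)

/-- assemble a matching from cross data and two internal matchings -/
def assembleFun (g : {x : α // x ∈ S} ≃ {x : α // x ∈ T})
    (σA : FPF {x : α // p x ∧ x ∉ S}) (σB : FPF {x : α // ¬ p x ∧ x ∉ T}) : α → α :=
  fun x =>
    if h : x ∈ S then (g ⟨x, h⟩).1
    else if h' : x ∈ T then (g.symm ⟨x, h'⟩).1
    else if hp : p x then (σA.1 ⟨x, hp, h⟩).1
    else (σB.1 ⟨x, hp, h'⟩).1

variable (hSp : ∀ x ∈ S, p x) (hTp : ∀ x ∈ T, ¬ p x)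
variable (g : {x : α // x ∈ S} ≃ {x : α // x ∈ T})
    (σA : FPF {x : α // p x ∧ x ∉ S}) (σB : FPF {x : α // ¬ p x ∧ x ∉ T})

set_option linter.unusedSectionVars false

include hSp hTp

theorem assembleFun_involutive :
    Function.Involutive (assembleFun p S T g σA σB) := by
  intro x
  unfold assembleFun
  by_cases h : x ∈ S
  · have hT : (g ⟨x, h⟩).1 ∈ T := (g ⟨x, h⟩).2
    have hnS : (g ⟨x, h⟩).1 ∉ S := fun hc => hTp _ hT (hSp _ hc)
    simp only [dif_pos h, dif_neg hnS, dif_pos hT, Subtype.coe_eta, Equiv.symm_apply_apply]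
  · by_cases h' : x ∈ T
    · have hS2 : (g.symm ⟨x, h'⟩).1 ∈ S := (g.symm ⟨x, h'⟩).2
      simp only [dif_neg h, dif_pos h', dif_pos hS2, Subtype.coe_eta, Equiv.apply_symm_apply]
    · by_cases hp : p x
      · have h2 := (σA.1 ⟨x, hp, h⟩).2
        have hnT : (σA.1 ⟨x, hp, h⟩).1 ∉ T := fun hc => hTp _ hc h2.1
        simp only [dif_neg h, dif_neg h', dif_pos hp, dif_neg h2.2, dif_neg hnT,
          dif_pos h2.1, Subtype.coe_eta]
        rw [(σA.2 ⟨x, hp, h⟩).2]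
      · have h2 := (σB.1 ⟨x, hp, h'⟩).2
        have hnS : (σB.1 ⟨x, hp, h'⟩).1 ∉ S := fun hc => h2.1 (hSp _ hc)
        simp only [dif_neg h, dif_neg h', dif_neg hp, dif_neg h2.2, dif_neg hnS,
          dif_neg h2.1, Subtype.coe_eta]
        rw [(σB.2 ⟨x, hp, h'⟩).2]

theorem assembleFun_fpf (x : α) : assembleFun p S T g σA σB x ≠ x := by
  unfold assembleFun
  by_cases h : x ∈ S
  · simp only [dif_pos h]
    intro hc
    exact hTp _ (hc ▸ (g ⟨x, h⟩).2) (hSp _ h)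
  · by_cases h' : x ∈ T
    · simp only [dif_neg h, dif_pos h']
      intro hc
      exact h (hc ▸ (g.symm ⟨x, h'⟩).2)
    · by_cases hp : p x
      · simp only [dif_neg h, dif_neg h', dif_pos hp]
        exact fun hc => (σA.2 ⟨x, hp, h⟩).1 (Subtype.ext hc)
      · simp only [dif_neg h, dif_neg h', dif_neg hp]
        exact fun hc => (σB.2 ⟨x, hp, h'⟩).1 (Subtype.ext hc)

def assemble : FPF α :=
  ⟨(assembleFun_involutive p S T hSp hTp g σA σB).toPerm,
   fun x => ⟨assembleFun_fpf p S T hSp hTp g σA σB x,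
     assembleFun_involutive p S T hSp hTp g σA σB x⟩⟩

theorem assemble_apply (x : α) :
    (assemble p S T hSp hTp g σA σB).1 x = assembleFun p S T g σA σB x := rfl

theorem crossS_assemble : crossS p (assemble p S T hSp hTp g σA σB) = S := by
  ext x
  rw [crossS, Finset.mem_filter]
  simp only [crossS, Finset.mem_filter, Finset.mem_univ, true_and, assemble_apply]
  unfold assembleFun
  by_cases h : x ∈ S
  · simp only [dif_pos h]
    exact iff_of_true ⟨hSp _ h, hTp _ (g ⟨x, h⟩).2⟩ h
  · apply iff_of_false _ h
    by_cases h' : x ∈ T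
    · simp only [dif_neg h, dif_pos h']
      exact fun hc => hTp _ h' hc.1
    · by_cases hp : p x
      · simp only [dif_neg h, dif_neg h', dif_pos hp]
        exact fun hc => hc.2 (σA.1 ⟨x, hp, h⟩).2.1
      · simp only [dif_neg h, dif_neg h', dif_neg hp]
        exact fun hc => hp hc.1

theorem crossT_assemble : crossT p (assemble p S T hSp hTp g σA σB) = T := by
  ext x
  rw [crossT, Finset.mem_filter]
  simp only [crossT, Finset.mem_filter, Finset.mem_univ, true_and, assemble_apply]
  unfold assembleFun
  by_cases h' : x ∈ T
  · have h : x ∉ S := fun hc => hTp _ h' (hSp _ hc)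
    simp only [dif_neg h, dif_pos h']
    exact iff_of_true ⟨hTp _ h', hSp _ (g.symm ⟨x, h'⟩).2⟩ h'
  · apply iff_of_false _ h'
    by_cases h : x ∈ S
    · simp only [dif_pos h]
      exact fun hc => hc.1 (hSp _ h)
    · by_cases hp : p x
      · simp only [dif_neg h, dif_neg h', dif_pos hp]
        exact fun hc => hc.1 hp
      · simp only [dif_neg h, dif_neg h', dif_neg hp]
        exact fun hc => (σB.1 ⟨x, hp, h'⟩).2.1 hc.2

omit hSp hTp

theorem mem_crossS_iff (π : FPF α) (hS : crossS p π = S) (x : α) :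
    x ∈ S ↔ (p x ∧ ¬ p (π.1 x)) := by
  rw [← hS]; simp [crossS]

theorem mem_crossT_iff (π : FPF α) (hT : crossT p π = T) (x : α) :
    x ∈ T ↔ (¬ p x ∧ p (π.1 x)) := by
  rw [← hT]; simp [crossT]

theorem iffA (π : FPF α) (hS : crossS p π = S) (x : α) :
    (p x ∧ x ∉ S) ↔ (p (π.1 x) ∧ π.1 x ∉ S) := by
  simp only [mem_crossS_iff p S π hS]
  rw [(π.2 x).2]
  tauto

theorem iffB (π : FPF α) (hT : crossT p π = T) (x : α) :
    (¬ p x ∧ x ∉ T) ↔ (¬ p (π.1 x) ∧ π.1 x ∉ T) := by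
  simp only [mem_crossT_iff p T π hT]
  rw [(π.2 x).2]
  tauto

def fiberEquivB (hSp : ∀ x ∈ S, p x) (hTp : ∀ x ∈ T, ¬ p x) :
    {π : FPF α // crossS p π = S ∧ crossT p π = T} ≃
      (({x : α // x ∈ S} ≃ {x : α // x ∈ T}) ×
        FPF {x : α // p x ∧ x ∉ S} × FPF {x : α // ¬ p x ∧ x ∉ T}) where
  toFun := fun π =>
    (⟨fun x => ⟨π.1.1 x.1, (mem_crossT_iff p T π.1 π.2.2 _).mpr
        ⟨((mem_crossS_iff p S π.1 π.2.1 x.1).mp x.2).2,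
         by rw [(π.1.2 x.1).2]; exact ((mem_crossS_iff p S π.1 π.2.1 x.1).mp x.2).1⟩⟩,
      fun y => ⟨π.1.1 y.1, (mem_crossS_iff p S π.1 π.2.1 _).mpr
        ⟨((mem_crossT_iff p T π.1 π.2.2 y.1).mp y.2).2,
         by rw [(π.1.2 y.1).2]; exact ((mem_crossT_iff p T π.1 π.2.2 y.1).mp y.2).1⟩⟩,
      fun x => Subtype.ext (π.1.2 x.1).2,
      fun y => Subtype.ext (π.1.2 y.1).2⟩,
     ⟨π.1.1.subtypePerm (fun x => (iffA p S π.1 π.2.1 x).symm),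
      fun i => ⟨fun h => (π.1.2 i.1).1 (congrArg Subtype.val h),
        Subtype.ext (π.1.2 i.1).2⟩⟩,
     ⟨π.1.1.subtypePerm (fun x => (iffB p T π.1 π.2.2 x).symm),
      fun i => ⟨fun h => (π.1.2 i.1).1 (congrArg Subtype.val h),
        Subtype.ext (π.1.2 i.1).2⟩⟩)
  invFun := fun d =>
    ⟨assemble p S T hSp hTp d.1 d.2.1 d.2.2,
     crossS_assemble p S T hSp hTp d.1 d.2.1 d.2.2,
     crossT_assemble p S T hSp hTp d.1 d.2.1 d.2.2⟩
  left_inv := by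
    rintro ⟨π, hS, hT⟩
    apply Subtype.ext
    apply Subtype.ext
    apply Equiv.ext
    intro x
    show assembleFun p S T _ _ _ x = π.1 x
    unfold assembleFun
    by_cases h : x ∈ S
    · simp only [dif_pos h]
      rfl
    · by_cases h' : x ∈ T
      · simp only [dif_neg h, dif_pos h']
        rfl
      · by_cases hp : p x
        · simp only [dif_neg h, dif_neg h', dif_pos hp]
          rfl
        · simp only [dif_neg h, dif_neg h', dif_neg hp]
          rfl
  right_inv := by
    rintro ⟨g, σA, σB⟩
    refine Prod.ext ?_ (Prod.ext ?_ ?_)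
    · apply Equiv.ext
      rintro ⟨x, hx⟩
      apply Subtype.ext
      show assembleFun p S T g σA σB x = _
      unfold assembleFun
      simp only [dif_pos hx]
    · apply Subtype.ext
      apply Equiv.ext
      rintro ⟨x, hp, hnS⟩
      apply Subtype.ext
      show assembleFun p S T g σA σB x = _
      unfold assembleFun
      have hnT : x ∉ T := fun hc => hTp _ hc hp
      simp only [dif_neg hnS, dif_neg hnT, dif_pos hp]
    · apply Subtype.ext
      apply Equiv.ext
      rintro ⟨x, hp, hnT⟩
      apply Subtype.ext
      show assembleFun p S T g σA σB x = _
      unfold assembleFun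
      have hnS : x ∉ S := fun hc => hp (hSp _ hc)
      simp only [dif_neg hnS, dif_neg hnT, dif_neg hp]

end LemB

theorem lemB {α : Type} [Fintype α] [DecidableEq α] (p : α → Prop) [DecidablePred p] (k : ℕ) :
    Fintype.card {π : FPF α // (crossS p π).card = k} =
      ((Finset.univ.filter p).card.choose k) *
        ((Finset.univ.filter (fun x => ¬ p x)).card.choose k) * k.factorial *
        mf ((Finset.univ.filter p).card - k) *
        mf ((Finset.univ.filter (fun x => ¬ p x)).card - k) := by
  classical
  set Ap := Finset.univ.filter p with hAp
  set Bp := Finset.univ.filter (fun x => ¬ p x) with hBp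
  set C := k.factorial * mf (Ap.card - k) * mf (Bp.card - k) with hC
  set good : Finset α × Finset α → Prop :=
    fun st => (st.1 ⊆ Ap ∧ st.1.card = k) ∧ (st.2 ⊆ Bp ∧ st.2.card = k) with hgood
  have E := (Equiv.sigmaFiberEquiv
    (fun π : {π : FPF α // (crossS p π).card = k} => (crossS p π.1, crossT p π.1))).symm
  rw [Fintype.card_congr E, Fintype.card_sigma]
  have hfib : ∀ st : Finset α × Finset α,
      Fintype.card {π : {π : FPF α // (crossS p π).card = k} //
        (crossS p π.1, crossT p π.1) = st} = if good st then C else 0 := by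
    intro st
    by_cases hg : good st
    · rw [if_pos hg]
      obtain ⟨⟨hS1, hSk⟩, ⟨hT1, hTk⟩⟩ := hg
      have hSp : ∀ x ∈ st.1, p x := fun x hx => (Finset.mem_filter.mp (hS1 hx)).2
      have hTp : ∀ x ∈ st.2, ¬ p x := fun x hx => (Finset.mem_filter.mp (hT1 hx)).2
      have E1 : {π : {π : FPF α // (crossS p π).card = k} //
          (crossS p π.1, crossT p π.1) = st} ≃
          {π : FPF α // crossS p π = st.1 ∧ crossT p π = st.2} :=
        { toFun := fun q => ⟨q.1.1, by
            have h := q.2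
            rw [Prod.ext_iff] at h
            exact ⟨h.1, h.2⟩⟩
          invFun := fun r => ⟨⟨r.1, by rw [r.2.1]; exact hSk⟩, by
            apply Prod.ext <;> simp [r.2.1, r.2.2]⟩
          left_inv := fun q => by
            apply Subtype.ext; apply Subtype.ext; rfl
          right_inv := fun r => by
            apply Subtype.ext; rfl }
      rw [Fintype.card_congr (E1.trans (fiberEquivB p st.1 st.2 hSp hTp))]
      rw [Fintype.card_prod, Fintype.card_prod]
      have c1 : Fintype.card ({x : α // x ∈ st.1} ≃ {x : α // x ∈ st.2}) = k.factorial := by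
        rw [Fintype.card_equiv (Fintype.equivOfCardEq (by
          rw [Fintype.card_coe, Fintype.card_coe, hSk, hTk]))]
        rw [Fintype.card_coe, hSk]
      have c2 : Fintype.card (FPF {x : α // p x ∧ x ∉ st.1}) = mf (Ap.card - k) := by
        apply fpf_card_aux
        have e : {x : α // p x ∧ x ∉ st.1} ≃ {x : α // x ∈ Ap \ st.1} :=
          Equiv.subtypeEquivRight (fun x => by simp [hAp, Finset.mem_sdiff, and_comm])
        rw [Fintype.card_congr e, Fintype.card_coe, Finset.card_sdiff_of_subset hS1, hSk]
      have c3 : Fintype.card (FPF {x : α // ¬ p x ∧ x ∉ st.2}) = mf (Bp.card - k) := by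
        apply fpf_card_aux
        have e : {x : α // ¬ p x ∧ x ∉ st.2} ≃ {x : α // x ∈ Bp \ st.2} :=
          Equiv.subtypeEquivRight (fun x => by simp [hBp, Finset.mem_sdiff, and_comm])
        rw [Fintype.card_congr e, Fintype.card_coe, Finset.card_sdiff_of_subset hT1, hTk]
      rw [c1, c2, c3, hC, mul_assoc]
    · rw [if_neg hg, Fintype.card_eq_zero_iff]
      constructor
      rintro ⟨⟨π, hπk⟩, hst⟩
      rw [Prod.ext_iff] at hst
      apply hg
      constructor
      · rw [← hst.1]
        exact ⟨crossS_subset p π, hπk⟩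
      · rw [← hst.2]
        exact ⟨crossT_subset p π, by rw [crossT_card]; exact hπk⟩
  rw [Finset.sum_congr rfl (fun st _ => hfib st), Finset.sum_ite, Finset.sum_const,
    Finset.sum_const_zero, add_zero, smul_eq_mul]
  have hcard : (Finset.univ.filter good).card = Ap.card.choose k * Bp.card.choose k := by
    have hfg : Finset.univ.filter good = (Ap.powersetCard k) ×ˢ (Bp.powersetCard k) := by
      ext st
      rw [Finset.mem_filter, Finset.mem_product, Finset.mem_powersetCard,
        Finset.mem_powersetCard, hgood]
      simp only [Finset.mem_univ, true_and]
    rw [hfg, Finset.card_product, Finset.card_powersetCard, Finset.card_powersetCard]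
  rw [hcard, hC]
  ring

theorem fin_filter_lt_card (m n : ℕ) (h : n ≤ m) :
    (Finset.univ.filter (fun i : Fin m => i.1 < n)).card = n := by
  rw [← Finset.card_image_of_injective (Finset.univ.filter (fun i : Fin m => i.1 < n))
    Fin.val_injective]
  have : (Finset.univ.filter (fun i : Fin m => i.1 < n)).image Fin.val = Finset.range n := by
    ext x
    simp only [Finset.mem_image, Finset.mem_filter, Finset.mem_univ, true_and, Finset.mem_range]
    constructor
    · rintro ⟨i, hi, rfl⟩; exact hi
    · intro hx; exact ⟨⟨x, lt_of_lt_of_le hx h⟩, hx, rfl⟩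
  rw [this, Finset.card_range]

theorem final_arith (n k : ℕ) (hn : 2 ≤ n) :
    n.choose k * (n - 2).choose k * k.factorial * mf (n - k) * mf (n - 2 - k) =
      if Even (n - k) then n.choose k * (n - 2).choose k * k.factorial *
        (n - k - 1).doubleFactorial * (n - k - 3).doubleFactorial else 0 := by
  rcases le_or_gt k (n - 2) with hk | hk
  · have h2 : n - 2 - k = n - k - 2 := by omega
    rw [h2]
    unfold mf
    by_cases he : Even (n - k)
    · have he2 : Even (n - k - 2) := by
        rcases he with ⟨t, ht⟩; exact ⟨t - 1, by omega⟩
      rw [if_pos he, if_pos he2, if_pos he,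
        (by omega : n - k - 2 - 1 = n - k - 3)]
    · have he2 : ¬ Even (n - k - 2) := fun hc => he (by
        rcases hc with ⟨t, ht⟩; exact ⟨t + 1, by omega⟩)
      rw [if_neg he, if_neg he2, if_neg he]
      ring
  · rcases le_or_gt n k with hk2 | hk2
    · rw [(by omega : n - k = 0), (by omega : n - 2 - k = 0)]
      simp [mf]
    · rw [(by omega : n - k = 1), (by omega : n - 2 - k = 0)]
      simp [mf]

theorem matching_crossPairs_count (n k : ℕ) (hn : 2 ≤ n) :
    Nat.card {π : Matching (2 * n - 2) // crossPairs n π = k} =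
      if Even (n - k) then
        n.choose k * (n - 2).choose k * k.factorial *
          Nat.doubleFactorial (n - k - 1) * Nat.doubleFactorial (n - k - 3)
      else 0 := by
  have e : {π : Matching (2 * n - 2) // crossPairs n π = k} ≃
      {π : FPF (Fin (2 * n - 2)) // (crossS (fun i : Fin (2 * n - 2) => i.1 < n) π).card = k} := by
    apply Equiv.subtypeEquivRight
    intro π
    have hfe : Finset.univ.filter (fun i : Fin (2 * n - 2) => i.1 < n ∧ n ≤ (π.1 i).1) =
        crossS (fun i : Fin (2 * n - 2) => i.1 < n) π := by
      unfold crossS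
      apply Finset.filter_congr
      intro x _
      simp [not_lt]
    rw [crossPairs, hfe]
  rw [Nat.card_congr e, Nat.card_eq_fintype_card, lemB]
  have hA : (Finset.univ.filter (fun i : Fin (2 * n - 2) => i.1 < n)).card = n :=
    fin_filter_lt_card _ _ (by omega)
  have hB : (Finset.univ.filter (fun i : Fin (2 * n - 2) => ¬ i.1 < n)).card = n - 2 := by
    have := Finset.card_filter_add_card_filter_not
      (s := (Finset.univ : Finset (Fin (2 * n - 2)))) (p := fun i : Fin (2 * n - 2) => i.1 < n)
    rw [hA, Finset.card_univ, Fintype.card_fin] at this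
    omega
  rw [hA, hB]
  exact final_arith n k hn
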